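/- A bounded operator T on a complex Hilbert space H is both complex symmetric (with some conjugation C) and an isometry if and only if T is unitary. -/

import Mathlib

open scoped InnerProductSpace

/-- A conjugation on a complex inner product space: an antilinear, isometric involution. -/
def IsConjugation {H : Type*} [NormedAddCommGroup H] [InnerProductSpace ℂ H]
    (C : H → H) : Prop :=
  (∀ x y : H, C (x + y) = C x + C y) ∧
  (∀ (a : ℂ) (x : H), C (a • x) = (starRingEnd ℂ) a • C x) ∧
  (∀ x y : H, ⟪C x, C y⟫_ℂ = ⟪y, x⟫_ℂ) ∧
  (∀ x : H, C (C x) = x)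

namespace Stmt2Aux

open ContinuousLinearMap
set_option linter.unusedSectionVars false

variable {H : Type*} [NormedAddCommGroup H] [InnerProductSpace ℂ H] [CompleteSpace H]

noncomputable def W (u : unitary (H →L[ℂ] H)) (n : ℤ) : H →L[ℂ] H := ↑(u ^ n)


lemma W_zero' (u : unitary (H →L[ℂ] H)) (x : H) : W u 0 x = x := by
  rw [W, zpow_zero, OneMemClass.coe_one, ContinuousLinearMap.one_apply]

lemma W_coe_mul (u : unitary (H →L[ℂ] H)) (m n : ℤ) :
    W u (m + n) = W u m * W u n := by
  rw [W, W, W, zpow_add]; rfl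

lemma W_W (u : unitary (H →L[ℂ] H)) (m n : ℤ) (x : H) :
    W u m (W u n x) = W u (m + n) x := by
  rw [W_coe_mul, ContinuousLinearMap.mul_apply]

lemma W_adjoint (u : unitary (H →L[ℂ] H)) (m : ℤ) :
    adjoint (W u m) = W u (-m) := by
  rw [W, W, ← star_eq_adjoint, ← Unitary.coe_star, Unitary.star_eq_inv, ← zpow_neg]

lemma W_inner (u : unitary (H →L[ℂ] H)) (m n : ℤ) (x y : H) :
    ⟪W u m x, W u n y⟫_ℂ = ⟪x, W u (n - m) y⟫_ℂ := by
  rw [← adjoint_inner_right, W_adjoint, W_W, neg_add_eq_sub]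

lemma W_one (u : unitary (H →L[ℂ] H)) : W u 1 = ↑u := by rw [W, zpow_one]

variable (u : unitary (H →L[ℂ] H)) (S : Set H)

noncomputable def Phi : ((↥S × ℤ) →₀ ℂ) →ₗ[ℂ] H :=
  Finsupp.linearCombination ℂ fun p => W u p.2 ↑p.1

noncomputable def Phi' : ((↥S × ℤ) →₀ ℂ) →ₗ[ℂ] H :=
  Finsupp.linearCombination ℂ fun p => W u (-p.2) ↑p.1

noncomputable def conjF (a : (↥S × ℤ) →₀ ℂ) : (↥S × ℤ) →₀ ℂ :=
  a.mapRange (starRingEnd ℂ) (map_zero _)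

noncomputable def Psi (a : (↥S × ℤ) →₀ ℂ) : H := Phi' u S (conjF S a)

noncomputable def Rop (a : (↥S × ℤ) →₀ ℂ) : (↥S × ℤ) →₀ ℂ :=
  Finsupp.mapDomain (fun p : ↥S × ℤ => (p.1, -p.2)) (conjF S a)

noncomputable def Sh (a : (↥S × ℤ) →₀ ℂ) : (↥S × ℤ) →₀ ℂ :=
  Finsupp.mapDomain (fun p : ↥S × ℤ => (p.1, p.2 + 1)) a

variable {S}

lemma conjF_add (a b) : conjF S (a + b) = conjF S a + conjF S b :=
  Finsupp.mapRange_add (map_add _) a b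

lemma conjF_smul (c : ℂ) (a) : conjF S (c • a) = (starRingEnd ℂ) c • conjF S a := by
  ext p; simp [conjF, Finsupp.mapRange_apply, map_mul]

lemma conjF_conjF (a) : conjF S (conjF S a) = a := by
  ext p; simp [conjF, Finsupp.mapRange_apply]

lemma conjF_single (p : ↥S × ℤ) (c : ℂ) :
    conjF S (Finsupp.single p c) = Finsupp.single p ((starRingEnd ℂ) c) := by
  rw [conjF, Finsupp.mapRange_single]

lemma conjF_mapDomain (f : ↥S × ℤ → ↥S × ℤ) (a) :
    conjF S (Finsupp.mapDomain f a) = Finsupp.mapDomain f (conjF S a) :=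
  (Finsupp.mapDomain_mapRange _ _ _ _ (map_add _)).symm

lemma Psi_add (a b) : Psi u S (a + b) = Psi u S a + Psi u S b := by
  rw [Psi, Psi, Psi, conjF_add, map_add]

lemma Psi_zero : Psi u S 0 = 0 := by
  have : conjF S (0 : (↥S × ℤ) →₀ ℂ) = 0 := by ext p; simp [conjF]
  rw [Psi, this, map_zero]

lemma Psi_sub (a b) : Psi u S (a - b) = Psi u S a - Psi u S b := by
  have h : a - b + b = a := sub_add_cancel a b
  have h2 := Psi_add u (a - b) b
  rw [h] at h2
  rw [h2]; abel

lemma Psi_single (p : ↥S × ℤ) (c : ℂ) :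
    Psi u S (Finsupp.single p c) = (starRingEnd ℂ) c • W u (-p.2) ↑p.1 := by
  rw [Psi, conjF_single, Phi', Finsupp.linearCombination_single]

lemma Phi_single (p : ↥S × ℤ) (c : ℂ) :
    Phi u S (Finsupp.single p c) = c • W u p.2 ↑p.1 := by
  rw [Phi, Finsupp.linearCombination_single]

lemma Phi_Rop (a) : Phi u S (Rop S a) = Psi u S a := by
  rw [Phi, Rop, Finsupp.linearCombination_mapDomain]; rfl

lemma Psi_Rop (a) : Psi u S (Rop S a) = Phi u S a := by
  rw [Psi, Rop, conjF_mapDomain, conjF_conjF, Phi', Finsupp.linearCombination_mapDomain]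
  rw [Phi]
  have : ((fun p : ↥S × ℤ => W u (-p.2) ↑p.1) ∘ fun p : ↥S × ℤ => (p.1, -p.2)) =
      fun p : ↥S × ℤ => W u p.2 ↑p.1 := by
    funext p; simp
  rw [this]

lemma T_Phi (a) : (u : H →L[ℂ] H) (Phi u S a) = Phi u S (Sh S a) := by
  rw [Phi, Sh, Finsupp.linearCombination_mapDomain, Finsupp.linearCombination_apply,
    Finsupp.linearCombination_apply, map_finsuppSum]
  refine Finsupp.sum_congr fun p _ => ?_
  rw [map_smul]
  congr 1
  rw [← W_one u, W_W]
  show W u (1 + p.2) ↑p.1 = W u ((p.1, p.2 + 1) : ↥S × ℤ).2 ↑((p.1, p.2+1) : ↥S × ℤ).1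
  rw [add_comm]

lemma Tadj_Psi (a) : adjoint (u : H →L[ℂ] H) (Psi u S a) = Psi u S (Sh S a) := by
  have hadj : adjoint (u : H →L[ℂ] H) = W u (-1) := by rw [← W_one u, W_adjoint]
  rw [Psi, Psi, Sh, conjF_mapDomain, Phi', Finsupp.linearCombination_mapDomain,
    Finsupp.linearCombination_apply, Finsupp.linearCombination_apply, hadj, map_finsuppSum]
  refine Finsupp.sum_congr fun p _ => ?_
  rw [map_smul]
  congr 1
  rw [W_W]
  have h3 : -1 + -p.2 = -(p.2 + 1) := by ring
  rw [h3]
  rfl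

variable {u}

lemma term_key (hS : ∀ x ∈ S, ∀ y ∈ S, x ≠ y → ∀ m n : ℤ, ⟪W u m x, W u n y⟫_ℂ = 0)
    (p q : ↥S × ℤ) :
    ⟪W u (-p.2) ↑p.1, W u (-q.2) ↑q.1⟫_ℂ = ⟪W u q.2 ↑q.1, W u p.2 ↑p.1⟫_ℂ := by
  by_cases h : p.1 = q.1
  · rw [W_inner, W_inner, h]
    have h3 : -q.2 - -p.2 = p.2 - q.2 := by ring
    rw [h3]
  · have hne : (↑p.1 : H) ≠ ↑q.1 := fun hc => h (Subtype.coe_injective hc)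
    rw [hS _ p.1.2 _ q.1.2 hne, hS _ q.1.2 _ p.1.2 (Ne.symm hne)]

lemma key_inner_single (hS : ∀ x ∈ S, ∀ y ∈ S, x ≠ y → ∀ m n : ℤ, ⟪W u m x, W u n y⟫_ℂ = 0)
    (p : ↥S × ℤ) (c : ℂ) (b : (↥S × ℤ) →₀ ℂ) :
    ⟪Psi u S (Finsupp.single p c), Psi u S b⟫_ℂ =
      ⟪Phi u S b, Phi u S (Finsupp.single p c)⟫_ℂ := by
  induction b using Finsupp.induction₂ with
  | zero => simp [Psi_zero]
  | add_single q d g _ _ ih2 =>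
    rw [Psi_add, map_add, inner_add_left, inner_add_right, ih2]
    congr 1
    rw [Psi_single, Psi_single, Phi_single, Phi_single, inner_smul_left, inner_smul_right,
      inner_smul_left, inner_smul_right, term_key hS p q]
    simp only [Complex.conj_conj]
    ring

lemma key_inner (hS : ∀ x ∈ S, ∀ y ∈ S, x ≠ y → ∀ m n : ℤ, ⟪W u m x, W u n y⟫_ℂ = 0)
    (a b : (↥S × ℤ) →₀ ℂ) :
    ⟪Psi u S a, Psi u S b⟫_ℂ = ⟪Phi u S b, Phi u S a⟫_ℂ := by
  induction a using Finsupp.induction₂ with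
  | zero => simp [Psi_zero]
  | add_single p c f _ _ ih =>
    rw [Psi_add, map_add, inner_add_left, inner_add_right, ih, key_inner_single hS]

lemma welldef (hS : ∀ x ∈ S, ∀ y ∈ S, x ≠ y → ∀ m n : ℤ, ⟪W u m x, W u n y⟫_ℂ = 0)
    {a b : (↥S × ℤ) →₀ ℂ} (h : Phi u S a = Phi u S b) : Psi u S a = Psi u S b := by
  have h1 : Phi u S (a - b) = 0 := by rw [map_sub, h, sub_self]
  have h2 : ⟪Psi u S (a - b), Psi u S (a - b)⟫_ℂ = 0 := by
    rw [key_inner hS, h1, inner_zero_left]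
  have h3 : Psi u S (a - b) = 0 := inner_self_eq_zero.mp h2
  rw [Psi_sub] at h3
  exact sub_eq_zero.mp h3

variable (u) in
lemma construct
    (hS : ∀ x ∈ S, ∀ y ∈ S, x ≠ y → ∀ m n : ℤ, ⟪W u m x, W u n y⟫_ℂ = 0)
    (hdense : Dense ((Submodule.span ℂ
      (Set.range fun p : ↥S × ℤ => W u p.2 ↑p.1) : Submodule ℂ H) : Set H)) :
    ∃ C : H → H, IsConjugation C ∧
      ∀ x : H, C (adjoint (u : H →L[ℂ] H) (C x)) = (u : H →L[ℂ] H) x := by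
  classical
  set V : Submodule ℂ H := Submodule.span ℂ (Set.range fun p : ↥S × ℤ => W u p.2 ↑p.1) with hV
  have hmemiff : ∀ x : H, x ∈ V ↔ ∃ a, Phi u S a = x := by
    intro x
    rw [hV, Finsupp.mem_span_range_iff_exists_finsupp]
    constructor
    · rintro ⟨c, hc⟩
      exact ⟨c, by rw [Phi, Finsupp.linearCombination_apply]; exact hc⟩
    · rintro ⟨c, hc⟩
      exact ⟨c, by rw [Phi, Finsupp.linearCombination_apply] at hc; exact hc⟩
  have hPhiMem : ∀ a, Phi u S a ∈ V := fun a => (hmemiff _).mpr ⟨a, rfl⟩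
  have hsurj : ∀ v : ↥V, ∃ a, Phi u S a = (v : H) := fun v => (hmemiff _).mp v.2
  choose pick hpick using hsurj
  set C0 : ↥V → H := fun v => Psi u S (pick v) with hC0
  have hC0eq : ∀ (a) (h : Phi u S a ∈ V), C0 ⟨Phi u S a, h⟩ = Psi u S a :=
    fun a h => welldef hS (hpick ⟨Phi u S a, h⟩)
  have hC0add : ∀ v w : ↥V, C0 (v + w) = C0 v + C0 w := by
    intro v w
    have h1 : Phi u S (pick v + pick w) = Phi u S (pick (v + w)) := by
      rw [map_add, hpick, hpick, hpick]; rfl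
    rw [hC0]
    dsimp only
    rw [← welldef hS h1, Psi_add]
  have hC0smul : ∀ (c : ℂ) (v : ↥V), C0 (c • v) = (starRingEnd ℂ) c • C0 v := by
    intro c v
    have h1 : Phi u S (c • pick v) = Phi u S (pick (c • v)) := by
      rw [map_smul, hpick, hpick]; rfl
    rw [hC0]
    dsimp only
    rw [← welldef hS h1, Psi, conjF_smul, map_smul, Psi]
  have hC0inner : ∀ v w : ↥V, ⟪C0 v, C0 w⟫_ℂ = ⟪(w : H), (v : H)⟫_ℂ := by
    intro v w
    rw [hC0]
    dsimp only
    rw [key_inner hS, hpick, hpick]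
  have hC0norm : ∀ v : ↥V, ‖C0 v‖ = ‖v‖ := by
    intro v
    have h1 := hC0inner v v
    rw [inner_self_eq_norm_sq_to_K, inner_self_eq_norm_sq_to_K] at h1
    have h2 : ‖C0 v‖ ^ 2 = ‖(v : H)‖ ^ 2 := by exact_mod_cast h1
    have h3 : ‖C0 v‖ = ‖(v : H)‖ := by
      nlinarith [norm_nonneg (C0 v), norm_nonneg (v : H)]
    exact h3
  let L : ↥V →ₛₗᵢ[starRingEnd ℂ] H :=
    { toFun := C0
      map_add' := hC0add
      map_smul' := hC0smul
      norm_map' := hC0norm }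
  let f : ↥V →SL[starRingEnd ℂ] H := L.toContinuousLinearMap
  let e : ↥V →L[ℂ] H := V.subtypeL
  have hd : DenseRange e := by
    have : Set.range e = (V : Set H) := Subtype.range_coe
    rw [DenseRange, this]
    exact hdense
  have hui : IsUniformInducing e := isometry_subtype_coe.isUniformInducing
  set Cmap := f.extend e with hCmap
  set C : H → H := ⇑Cmap with hC
  have hCe : ∀ v : ↥V, C (v : H) = C0 v := by
    intro v
    have : ((v : H)) = e v := rfl
    rw [hC, this, ContinuousLinearMap.extend_eq f hd hui]
    rfl
  have hCPhi : ∀ a, C (Phi u S a) = Psi u S a := by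
    intro a
    have : Phi u S a = ((⟨Phi u S a, hPhiMem a⟩ : ↥V) : H) := rfl
    rw [this, hCe, hC0eq]
  have hCcont : Continuous C := Cmap.continuous
  have hadd : ∀ x y : H, C (x + y) = C x + C y := fun x y => Cmap.map_add x y
  have hsmul : ∀ (c : ℂ) (x : H), C (c • x) = (starRingEnd ℂ) c • C x := fun c x =>
    ContinuousLinearMap.map_smulₛₗ Cmap c x
  have hinner : ∀ x y : H, ⟪C x, C y⟫_ℂ = ⟪y, x⟫_ℂ := by
    refine fun x y => DenseRange.induction_on₂ hd ?_ ?_ x y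
    · exact isClosed_eq
        (Continuous.inner (hCcont.comp continuous_fst) (hCcont.comp continuous_snd))
        (Continuous.inner continuous_snd continuous_fst)
    · intro v w
      have h1 : C (e v) = C0 v := hCe v
      have h2 : C (e w) = C0 w := hCe w
      show ⟪C (e v), C (e w)⟫_ℂ = ⟪(e w : H), (e v : H)⟫_ℂ
      rw [h1, h2]
      exact hC0inner v w
  have hinv : ∀ x : H, C (C x) = x := by
    refine fun x => DenseRange.induction_on hd x ?_ ?_
    · exact isClosed_eq (hCcont.comp hCcont) continuous_id
    · intro v
      show C (C ((v : H))) = (v : H)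
      rw [hCe v]
      have h1 : C0 v = Phi u S (Rop S (pick v)) := by rw [hC0]; exact (Phi_Rop u _).symm
      rw [h1, hCPhi, Psi_Rop, hpick]
  have hint : ∀ x : H, C (adjoint (u : H →L[ℂ] H) (C x)) = (u : H →L[ℂ] H) x := by
    refine fun x => DenseRange.induction_on hd x ?_ ?_
    · exact isClosed_eq
        (hCcont.comp ((adjoint (u : H →L[ℂ] H)).continuous.comp hCcont))
        (u : H →L[ℂ] H).continuous
    · intro v
      show C (adjoint (u : H →L[ℂ] H) (C ((v : H)))) = (u : H →L[ℂ] H) ((v : H))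
      have h0 : C ((v : H)) = Psi u S (pick v) := hCe v
      rw [h0, Tadj_Psi, ← Phi_Rop, hCPhi, Psi_Rop, ← T_Phi, hpick]
  exact ⟨C, ⟨hadd, hsmul, hinner, hinv⟩, hint⟩

variable (u) in
lemma exists_conj_unitary :
    ∃ C : H → H, IsConjugation C ∧
      ∀ x : H, C (adjoint (u : H →L[ℂ] H) (C x)) = (u : H →L[ℂ] H) x := by
  classical
  obtain ⟨S, hSmem, hSmax⟩ := zorn_subset
    {S : Set H | ∀ x ∈ S, ∀ y ∈ S, x ≠ y → ∀ m n : ℤ, ⟪W u m x, W u n y⟫_ℂ = 0} (by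
      intro c hc hchain
      refine ⟨⋃₀ c, ?_, fun s hs => Set.subset_sUnion_of_mem hs⟩
      rintro x ⟨A, hA, hxA⟩ y ⟨B, hB, hyB⟩ hxy m n
      rcases hchain.total hA hB with h | h
      · exact hc hB _ (h hxA) _ hyB hxy m n
      · exact hc hA _ hxA _ (h hyB) hxy m n)
  have hS := hSmem
  have hdense : Dense ((Submodule.span ℂ
      (Set.range fun p : ↥S × ℤ => W u p.2 ↑p.1) : Submodule ℂ H) : Set H) := by
    set V : Submodule ℂ H := Submodule.span ℂ (Set.range fun p : ↥S × ℤ => W u p.2 ↑p.1) with hV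
    rw [Submodule.dense_iff_topologicalClosure_eq_top, Submodule.topologicalClosure_eq_top_iff,
      Submodule.eq_bot_iff]
    intro z hz
    by_contra hz0
    have hz' := (Submodule.mem_orthogonal V z).mp hz
    have hzV : ∀ y ∈ S, ∀ k : ℤ, ⟪W u k y, z⟫_ℂ = 0 := by
      intro y hy k
      exact hz' _ (Submodule.subset_span ⟨(⟨y, hy⟩, k), rfl⟩)
    have case1 : ∀ y ∈ S, ∀ m n : ℤ, ⟪W u m z, W u n y⟫_ℂ = 0 := by
      intro y hy m n
      rw [W_inner, ← inner_conj_symm, hzV y hy (n - m), map_zero]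
    have hzS : z ∉ S := by
      intro hzS
      have h0 := hzV z hzS 0
      rw [W_zero'] at h0
      exact hz0 (inner_self_eq_zero.mp h0)
    have hins : insert z S ∈
        {S : Set H | ∀ x ∈ S, ∀ y ∈ S, x ≠ y → ∀ m n : ℤ, ⟪W u m x, W u n y⟫_ℂ = 0} := by
      rintro x hx y hy hxy m n
      rcases hx with rfl | hxS
      · rcases hy with rfl | hyS
        · exact absurd rfl hxy
        · exact case1 y hyS m n
      · rcases hy with rfl | hyS
        · rw [← inner_conj_symm, case1 x hxS n m, map_zero]
        · exact hS x hxS y hyS hxy m n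
    have : insert z S ⊆ S := hSmax hins (Set.subset_insert z S)
    exact hzS (this (Set.mem_insert z S))
  exact construct u hS hdense

end Stmt2Aux

/-- A bounded operator `T` on a complex Hilbert space is both complex symmetric (with some
conjugation `C`) and an isometry if and only if `T` is unitary. -/
theorem stmt2 {H : Type*} [NormedAddCommGroup H] [InnerProductSpace ℂ H] [CompleteSpace H]
    (T : H →L[ℂ] H) :
    ((∃ C : H → H, IsConjugation C ∧
        ∀ x : H, C (ContinuousLinearMap.adjoint T (C x)) = T x) ∧
      (∀ x : H, ‖T x‖ = ‖x‖)) ↔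
    (ContinuousLinearMap.adjoint T ∘L T = 1 ∧ T ∘L ContinuousLinearMap.adjoint T = 1) := by
  constructor
  · rintro ⟨⟨C, ⟨hadd, hsm, hinn, hinvol⟩, hCT⟩, hiso⟩
    have h1 : ContinuousLinearMap.adjoint T ∘L T = 1 := by
      ext x
      refine ext_inner_left ℂ fun v => ?_
      simp only [ContinuousLinearMap.comp_apply, ContinuousLinearMap.one_apply]
      rw [ContinuousLinearMap.adjoint_inner_right]
      exact (⟨(T : H →ₗ[ℂ] H), hiso⟩ : H →ₗᵢ[ℂ] H).inner_map_map v x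
    have hCT' : ∀ x, C (ContinuousLinearMap.adjoint T x) = T (C x) := by
      intro x
      have h := hCT (C x)
      rwa [hinvol] at h
    have h2 : T ∘L ContinuousLinearMap.adjoint T = 1 := by
      ext x
      simp only [ContinuousLinearMap.comp_apply, ContinuousLinearMap.one_apply]
      have e1 : ContinuousLinearMap.adjoint T x = C (T (C x)) := by
        calc ContinuousLinearMap.adjoint T x
            = C (C (ContinuousLinearMap.adjoint T x)) := (hinvol _).symm
          _ = C (T (C x)) := by rw [hCT' x]
      rw [e1, ← hCT' (T (C x))]
      have e2 : ContinuousLinearMap.adjoint T (T (C x)) = C x := by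
        have h := congrArg (fun A : H →L[ℂ] H => A (C x)) h1
        simpa using h
      rw [e2, hinvol]
    exact ⟨h1, h2⟩
  · rintro ⟨h1, h2⟩
    have hu : T ∈ unitary (H →L[ℂ] H) := by
      rw [Unitary.mem_iff]
      constructor
      · rw [ContinuousLinearMap.star_eq_adjoint]; exact h1
      · rw [ContinuousLinearMap.star_eq_adjoint]; exact h2
    obtain ⟨C, hC, hCT⟩ :=
      Stmt2Aux.exists_conj_unitary (⟨T, hu⟩ : unitary (H →L[ℂ] H))
    refine ⟨⟨C, hC, fun x => hCT x⟩, ?_⟩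
    intro x
    have hx : ⟪T x, T x⟫_ℂ = ⟪x, x⟫_ℂ := by
      rw [← ContinuousLinearMap.adjoint_inner_left]
      have e2 : ContinuousLinearMap.adjoint T (T x) = x := by
        have h := congrArg (fun A : H →L[ℂ] H => A x) h1
        simpa using h
      rw [e2]
    rw [inner_self_eq_norm_sq_to_K, inner_self_eq_norm_sq_to_K] at hx
    have h3 : ‖T x‖ ^ 2 = ‖x‖ ^ 2 := by exact_mod_cast hx
    nlinarith [norm_nonneg (T x), norm_nonneg x]
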